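/- arXiv:0707.2862 — 4 statements merged into one kernel-verified Lean document; each statement's English description precedes it below -/
import Mathlib

section
/- For integers 1 ≤ t ≤ k-2, the polynomial R_t(x) = ∑_{j=0}^{t} (-1)^j C(k,j) ∏_{i=1}^{k-1} (x + k - 1 - j - (i-1) ) restricted to the product (x+k-1-j)(x+k-2-j)⋯(x+1-j) satisfies R_t(x) = (-1)^t C(k-1,t) (x+k-t-1)⋯(x+1)(x-1)⋯(x-t). -/
theorem stmt2aux (k : ℕ) : ∀ t : ℕ, t + 1 ≤ k → ∀ x : ℝ,
    ∑ j ∈ Finset.range (t + 1),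
        (-1 : ℝ) ^ j * (k.choose j) * ∏ i ∈ Finset.range (k - 1), (x + k - 1 - j - i)
      = (-1 : ℝ) ^ t * ((k - 1).choose t) *
          (∏ i ∈ Finset.range (k - 1 - t), (x + k - t - 1 - i)) *
          ∏ i ∈ Finset.range t, (x - 1 - i) := by
  intro t
  induction t with
  | zero => intro hk x; simp
  | succ t ih =>
    intro hk x
    obtain ⟨a, rfl⟩ : ∃ a, k = t + 2 + a := ⟨k - (t + 2), by omega⟩
    rw [Finset.sum_range_succ, ih (by omega) x]
    have hb1 : t + 2 + a - 1 - t = a + 1 := by omega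
    have hb2 : t + 2 + a - 1 = t + 1 + a := by omega
    have hb3 : t + 1 + a - (t + 1) = a := by omega
    rw [hb1, hb2, hb3]
    set Q : ℝ := ∏ i ∈ Finset.range a, (x + a - i) with hQ
    set B : ℝ := ∏ i ∈ Finset.range t, (x - 1 - i) with hB
    have e1 : ∏ i ∈ Finset.range (a + 1), (x + ↑(t + 2 + a) - ↑t - 1 - ↑i)
        = (x + a + 1) * Q := by
      rw [Finset.prod_range_succ']
      rw [Finset.prod_congr rfl (fun i _ => by push_cast; ring_nf :
        ∀ i ∈ Finset.range a, (x + ↑(t + 2 + a) - ↑t - 1 - ↑(i + 1)) = x + a - i)]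
      push_cast; ring
    have e2 : ∏ i ∈ Finset.range (t + 1 + a), (x + ↑(t + 2 + a) - 1 - ↑(t + 1) - ↑i)
        = Q * (x * B) := by
      have : t + 1 + a = a + (t + 1) := by omega
      rw [this, Finset.prod_range_add]
      congr 1
      · exact Finset.prod_congr rfl (fun i _ => by push_cast; ring)
      · rw [Finset.prod_range_succ']
        rw [Finset.prod_congr rfl (fun i _ => by push_cast; ring_nf :
          ∀ i ∈ Finset.range t, (x + ↑(t + 2 + a) - 1 - ↑(t + 1) - ↑(a + (i + 1))) = x - 1 - i)]
        push_cast; ring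
    have e3 : ∏ i ∈ Finset.range a, (x + ↑(t + 2 + a) - ↑(t + 1) - 1 - ↑i) = Q :=
      Finset.prod_congr rfl (fun i _ => by push_cast; ring)
    have e4 : ∏ i ∈ Finset.range (t + 1), (x - 1 - (i : ℝ)) = B * (x - 1 - t) := by
      rw [Finset.prod_range_succ]
    rw [e1, e2, e3, e4]
    have h1 : ((t + 2 + a).choose (t + 1) : ℝ)
        = ((t + 1 + a).choose t : ℝ) + ((t + 1 + a).choose (t + 1) : ℝ) := by
      have : (t + 1 + a) + 1 = t + 2 + a := by omega
      rw [← this, Nat.choose_succ_succ']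
      push_cast; ring
    have h2 : ((t + 1 + a).choose (t + 1) : ℝ) * (t + 1) = ((t + 1 + a).choose t : ℝ) * (a + 1) := by
      have := Nat.choose_succ_right_eq (t + 1 + a) t
      have h3 : t + 1 + a - t = a + 1 := by omega
      rw [h3] at this
      exact_mod_cast congrArg (Nat.cast : ℕ → ℝ) this
    push_cast
    linear_combination (-(-1:ℝ)^t * Q * B * x) * h1 + (-(-1:ℝ)^t * Q * B) * h2

/-- For integers `1 ≤ t ≤ k-2`, the polynomial
`R_t(x) = ∑_{j=0}^{t} (-1)^j C(k,j) (x+k-1-j)(x+k-2-j)⋯(x+1-j)` satisfies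
`R_t(x) = (-1)^t C(k-1,t) (x+k-t-1)⋯(x+1)(x-1)⋯(x-t)`. -/
theorem stmt2 (k t : ℕ) (ht1 : 1 ≤ t) (ht2 : t + 2 ≤ k) (x : ℝ) :
    ∑ j ∈ Finset.range (t + 1),
        (-1 : ℝ) ^ j * (k.choose j) * ∏ i ∈ Finset.range (k - 1), (x + k - 1 - j - i)
      = (-1 : ℝ) ^ t * ((k - 1).choose t) *
          (∏ i ∈ Finset.range (k - 1 - t), (x + k - t - 1 - i)) *
          ∏ i ∈ Finset.range t, (x - 1 - i) := by
  exact stmt2aux k t (by omega) x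
end

section
/- For a fixed integer k ≥ 2, the polynomial R_{k-1}(x) = ∑_{j=0}^{k-1} (-1)^j C(k,j) (x+k-1-j)(x+k-2-j)⋯(x+1-j) equals -(-1)^k (x-1)(x-2)⋯(x-k+1); in particular R_{k-1}(k-1) = 0. -/
open Polynomial Finset
open scoped fwdDiff

private lemma fwdDiff_iter_zero_fn (h : ℝ) (n : ℕ) :
    (fwdDiff h)^[n] (0 : ℝ → ℝ) = 0 := by
  induction n with
  | zero => rfl
  | succ n IH =>
    rw [Function.iterate_succ_apply]
    have : Δ_[h] (0 : ℝ → ℝ) = 0 := by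
      ext x; simp [fwdDiff]
    rw [this, IH]

private lemma fwdDiff_eval_poly (h : ℝ) (P : ℝ[X]) :
    Δ_[h] (fun x => P.eval x) = fun x => (P.comp (X + C h) - P).eval x := by
  ext x
  simp [fwdDiff, eval_comp, add_comm]

private lemma natDegree_comp_sub_lt (h : ℝ) (P : ℝ[X]) (hP : 0 < P.natDegree) :
    (P.comp (X + C h) - P).natDegree < P.natDegree := by
  have hP0 : P ≠ 0 := fun h0 => by simp [h0] at hP
  have hq : (X + C h : ℝ[X]).natDegree = 1 := natDegree_X_add_C h
  have hlc : (P.comp (X + C h)).leadingCoeff = P.leadingCoeff := by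
    rw [leadingCoeff_comp (by rw [hq]; norm_num), leadingCoeff_X_add_C, one_pow, mul_one]
  have hnd : (P.comp (X + C h)).natDegree = P.natDegree := by
    rw [natDegree_comp, hq, mul_one]
  have hcomp0 : P.comp (X + C h) ≠ 0 := by
    intro h0
    rw [h0, leadingCoeff_zero] at hlc
    exact hP0 (leadingCoeff_eq_zero.mp hlc.symm)
  have hdeg : (P.comp (X + C h)).degree = P.degree := by
    rw [degree_eq_natDegree hcomp0, degree_eq_natDegree hP0, hnd]
  have hlt := Polynomial.degree_sub_lt hdeg hcomp0 hlc
  by_cases h0 : P.comp (X + C h) - P = 0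
  · rw [h0]; simpa using hP
  · have := Polynomial.natDegree_lt_natDegree h0 hlt
    rw [hnd] at this; exact this

private lemma fwdDiff_iter_eval_eq_zero (h : ℝ) (n : ℕ) :
    ∀ P : ℝ[X], P.natDegree < n → (fwdDiff h)^[n] (fun x => P.eval x) = 0 := by
  induction n with
  | zero => intro P hP; exact absurd hP (Nat.not_lt_zero _)
  | succ n IH =>
    intro P hP
    rw [Function.iterate_succ_apply, fwdDiff_eval_poly]
    rcases Nat.eq_zero_or_pos P.natDegree with h0 | hpos
    · have : P.comp (X + C h) - P = 0 := by
        rw [Polynomial.eq_C_of_natDegree_eq_zero h0, C_comp, sub_self]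
      rw [this]
      simp only [eval_zero]
      exact fwdDiff_iter_zero_fn h n
    · have hlt : (P.comp (X + C h) - P).natDegree < n :=
        lt_of_lt_of_le (natDegree_comp_sub_lt h P hpos) (Nat.lt_succ_iff.mp hP)
      exact IH _ hlt

/-- For fixed `k ≥ 2`, the polynomial
`R_{k-1}(x) = ∑_{j=0}^{k-1} (-1)^j C(k,j) (x+k-1-j)⋯(x+1-j)` equals
`-(-1)^k (x-1)(x-2)⋯(x-k+1)`; in particular `R_{k-1}(k-1) = 0`. -/
theorem stmt3 (k : ℕ) (hk : 2 ≤ k) :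
    (∀ x : ℝ,
      ∑ j ∈ Finset.range k,
          (-1 : ℝ) ^ j * (k.choose j) * ∏ i ∈ Finset.range (k - 1), (x + k - 1 - j - i)
        = -(-1 : ℝ) ^ k * ∏ i ∈ Finset.range (k - 1), (x - 1 - i)) ∧
    ∑ j ∈ Finset.range k,
        (-1 : ℝ) ^ j * (k.choose j) *
          ∏ i ∈ Finset.range (k - 1), (((k : ℝ) - 1) + k - 1 - j - i) = 0 := by
  set f : ℝ → ℝ := fun t => ∏ i ∈ Finset.range (k - 1), (t + k - 1 - i) with hf
  set P : ℝ[X] := ∏ i ∈ Finset.range (k - 1), (X + C ((k : ℝ) - 1 - i)) with hP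
  have hfP : ∀ t : ℝ, f t = P.eval t := by
    intro t
    rw [hf, hP, eval_prod]
    refine Finset.prod_congr rfl fun i _ => ?_
    simp [eval_add]
    ring
  have hPdeg : P.natDegree = k - 1 := by
    rw [hP, natDegree_prod _ _ (fun i _ => X_add_C_ne_zero _)]
    simp only [natDegree_X_add_C]
    rw [Finset.sum_const, smul_eq_mul, mul_one, Finset.card_range]
  have hzero : (fwdDiff (-1 : ℝ))^[k] f = 0 := by
    have : f = fun x => P.eval x := funext hfP
    rw [this]
    exact fwdDiff_iter_eval_eq_zero (-1) k P (by omega)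
  -- the full alternating sum over range (k+1) vanishes
  have hsum : ∀ x : ℝ,
      ∑ j ∈ Finset.range (k + 1), (-1 : ℝ) ^ j * (k.choose j) * f (x - j) = 0 := by
    intro x
    have h0 : ∑ j ∈ Finset.range (k + 1),
        ((-1 : ℤ) ^ (k - j) * (k.choose j)) • f (x + j • (-1 : ℝ)) = 0 := by
      have h := fwdDiff_iter_eq_sum_shift (-1 : ℝ) f k x
      rw [hzero] at h
      simpa using h.symm
    have h0' : ∑ j ∈ Finset.range (k + 1),
        (-1 : ℝ) ^ (k - j) * (k.choose j) * f (x - j) = 0 := by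
      calc ∑ j ∈ Finset.range (k + 1), (-1 : ℝ) ^ (k - j) * (k.choose j) * f (x - j)
          = ∑ j ∈ Finset.range (k + 1),
              ((-1 : ℤ) ^ (k - j) * (k.choose j)) • f (x + j • (-1 : ℝ)) := by
            refine Finset.sum_congr rfl fun j _ => ?_
            push_cast [zsmul_eq_mul]
            ring_nf
        _ = 0 := h0
    calc ∑ j ∈ Finset.range (k + 1), (-1 : ℝ) ^ j * (k.choose j) * f (x - j)
        = (-1 : ℝ) ^ k * ∑ j ∈ Finset.range (k + 1),
            (-1 : ℝ) ^ (k - j) * (k.choose j) * f (x - j) := by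
          rw [Finset.mul_sum]
          refine Finset.sum_congr rfl fun j hj => ?_
          have hjk : j ≤ k := Nat.lt_succ_iff.mp (Finset.mem_range.mp hj)
          have h1 : (-1 : ℝ) ^ j * (-1 : ℝ) ^ (k - j) = (-1 : ℝ) ^ k := by
            rw [← pow_add]; congr 1; omega
          have h2 : ((-1 : ℝ) ^ (k - j)) * ((-1 : ℝ) ^ (k - j)) = 1 := by
            rw [← pow_add, ← two_mul]
            exact Even.neg_one_pow ⟨k - j, by ring⟩
          have : (-1 : ℝ) ^ j = (-1 : ℝ) ^ k * (-1 : ℝ) ^ (k - j) := by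
            rw [← h1, mul_assoc, h2, mul_one]
          rw [this]; ring
      _ = 0 := by rw [h0', mul_zero]
  have hmain : ∀ x : ℝ,
      ∑ j ∈ Finset.range k,
          (-1 : ℝ) ^ j * (k.choose j) * ∏ i ∈ Finset.range (k - 1), (x + k - 1 - j - i)
        = -(-1 : ℝ) ^ k * ∏ i ∈ Finset.range (k - 1), (x - 1 - i) := by
    intro x
    have h1 : ∀ j : ℕ, (∏ i ∈ Finset.range (k - 1), (x + k - 1 - j - i)) = f (x - j) := by
      intro j
      rw [hf]
      exact Finset.prod_congr rfl fun i _ => by ring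
    have h2 := hsum x
    rw [Finset.sum_range_succ] at h2
    have h3 : f (x - k) = ∏ i ∈ Finset.range (k - 1), (x - 1 - i) := by
      rw [hf]
      exact Finset.prod_congr rfl fun i _ => by ring
    simp only [Nat.choose_self, Nat.cast_one, mul_one] at h2
    calc ∑ j ∈ Finset.range k,
          (-1 : ℝ) ^ j * (k.choose j) * ∏ i ∈ Finset.range (k - 1), (x + k - 1 - j - i)
        = ∑ j ∈ Finset.range k, (-1 : ℝ) ^ j * (k.choose j) * f (x - j) := by
          exact Finset.sum_congr rfl fun j _ => by rw [h1]
      _ = -(-1 : ℝ) ^ k * f (x - k) := by linarith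
      _ = -(-1 : ℝ) ^ k * ∏ i ∈ Finset.range (k - 1), (x - 1 - i) := by rw [h3]
  refine ⟨hmain, ?_⟩
  rw [hmain ((k : ℝ) - 1)]
  have hmem : k - 2 ∈ Finset.range (k - 1) := Finset.mem_range.mpr (by omega)
  rw [Finset.prod_eq_zero hmem (by push_cast [Nat.cast_sub hk]; ring), mul_zero]
end

section
/- In the Grassmann algebra Λ_{2n}, let s = ∑_{j=1}^n x̀_{2j-1} x̀_{2j} and let Δ_f = 4 ∑_{j=1}^n ∂_{x̀_{2j-1}} ∂_{x̀_{2j}} be the fermionic Laplace operator acting by (left) derivations on Λ_{2n}. Then for all integers j, l with 0 ≤ l ≤ n and 0 ≤ j ≤ n-l, one has Δ_f^j (s^{n-l}) = 4^j (-1)^j · ((n-l)!/(n-l-j)!) · ((l+j)!/l!) · s^{n-l-j}. -/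
/-- The Grassmann algebra `Λ_{2n}`, realized as the Clifford algebra of the zero
quadratic form on `ℝ^{2n}` (i.e. the exterior algebra). -/
abbrev Grassmann (n : ℕ) : Type :=
  CliffordAlgebra (0 : QuadraticForm ℝ (Fin (2 * n) → ℝ))

/-- The generator `x̀_i` of the Grassmann algebra. -/
noncomputable def grGen (n : ℕ) (i : Fin (2 * n)) : Grassmann n :=
  CliffordAlgebra.ι (0 : QuadraticForm ℝ (Fin (2 * n) → ℝ)) (Pi.single i 1)

/-- The left Grassmann partial derivative `∂_{x̀_i}`: the odd derivation with
`∂_{x̀_i}(x̀_j) = δ_{ij}`, given by left contraction with the `i`-th coordinate functional. -/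
noncomputable def grD (n : ℕ) (i : Fin (2 * n)) : Module.End ℝ (Grassmann n) :=
  CliffordAlgebra.contractLeft (Q := (0 : QuadraticForm ℝ (Fin (2 * n) → ℝ)))
    (LinearMap.proj i)

/-- `s = ∑_{j=1}^n x̀_{2j-1} x̀_{2j}` (0-based pairs `(2j, 2j+1)`). -/
noncomputable def grS (n : ℕ) : Grassmann n :=
  ∑ j : Fin n, grGen n ⟨2 * j.1, by have := j.isLt; omega⟩ *
    grGen n ⟨2 * j.1 + 1, by have := j.isLt; omega⟩

/-- The fermionic Laplace operator `Δ_f = 4 ∑_{j=1}^n ∂_{x̀_{2j-1}} ∂_{x̀_{2j}}`. -/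
noncomputable def grLapF (n : ℕ) : Module.End ℝ (Grassmann n) :=
  4 • ∑ j : Fin n, grD n ⟨2 * j.1, by have := j.isLt; omega⟩ ∘ₗ
    grD n ⟨2 * j.1 + 1, by have := j.isLt; omega⟩

namespace GrAux

def A {n : ℕ} (k : Fin n) : Fin (2 * n) := ⟨2 * k.1, by have := k.isLt; omega⟩
def B {n : ℕ} (k : Fin n) : Fin (2 * n) := ⟨2 * k.1 + 1, by have := k.isLt; omega⟩

noncomputable def p (n : ℕ) (k : Fin n) : Grassmann n := grGen n (A k) * grGen n (B k)

lemma p_def (n : ℕ) (k : Fin n) : p n k = grGen n (A k) * grGen n (B k) := rfl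

lemma grS_eq (n : ℕ) : grS n = ∑ k : Fin n, p n k := rfl

lemma grLapF_apply (n : ℕ) (x : Grassmann n) :
    grLapF n x = 4 • ∑ k : Fin n, grD n (A k) (grD n (B k) x) := by
  show (4 • ∑ k : Fin n, grD n (A k) ∘ₗ grD n (B k)) x = _
  simp [LinearMap.sum_apply, Finset.mul_sum]

lemma grD_gen (n : ℕ) (i j : Fin (2 * n)) :
    grD n i (grGen n j) = if j = i then 1 else 0 := by
  rw [grD, grGen, CliffordAlgebra.contractLeft_ι]
  by_cases h : j = i <;> simp [h, Pi.single_apply]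

lemma grD_mul (n : ℕ) (i u : Fin (2 * n)) (x : Grassmann n) :
    grD n i (grGen n u * x) = (if u = i then (1:ℝ) else 0) • x - grGen n u * grD n i x := by
  rw [grD, grGen, CliffordAlgebra.contractLeft_ι_mul]
  by_cases h : u = i <;> simp [h, Pi.single_apply, grD, grGen]

lemma gen_sq (n : ℕ) (i : Fin (2 * n)) : grGen n i * grGen n i = 0 := by
  simp [grGen, CliffordAlgebra.ι_sq_scalar]

lemma gen_swap (n : ℕ) (i j : Fin (2 * n)) :
    grGen n i * grGen n j = -(grGen n j * grGen n i) := by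
  have h := CliffordAlgebra.ι_mul_ι_add_swap (Q := (0 : QuadraticForm ℝ (Fin (2 * n) → ℝ)))
    (Pi.single i 1) (Pi.single j 1)
  simp only [QuadraticMap.polar, QuadraticMap.zero_apply, sub_zero, sub_self, map_zero] at h
  rw [grGen, grGen]
  linear_combination (norm := noncomm_ring) h

lemma grD_p (n : ℕ) (i : Fin (2 * n)) (k : Fin n) :
    grD n i (p n k) = (if A k = i then (1:ℝ) else 0) • grGen n (B k)
      - (if B k = i then (1:ℝ) else 0) • grGen n (A k) := by
  rw [p, grD_mul, grD_gen]
  split_ifs <;> simp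

lemma grD_p_mul (n : ℕ) (i : Fin (2 * n)) (k : Fin n) (x : Grassmann n) :
    grD n i (p n k * x) = grD n i (p n k) * x + p n k * grD n i x := by
  rw [p, mul_assoc, grD_mul, grD_mul, ← p, grD_p]
  split_ifs <;> simp [mul_sub, sub_mul, smul_mul_assoc, mul_smul_comm, mul_assoc, p] <;> abel

lemma grD_S_mul (n : ℕ) (i : Fin (2 * n)) (x : Grassmann n) :
    grD n i (grS n * x) = grD n i (grS n) * x + grS n * grD n i x := by
  rw [grS_eq, Finset.sum_mul, map_sum, map_sum]
  simp only [grD_p_mul, Finset.sum_add_distrib, Finset.sum_mul]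

lemma gen_mul_p (n : ℕ) (i : Fin (2 * n)) (k : Fin n) :
    grGen n i * p n k = p n k * grGen n i := by
  rw [p, ← mul_assoc, gen_swap n i (A k), neg_mul, mul_assoc, gen_swap n i (B k)]
  simp [mul_assoc]

lemma gen_comm_S (n : ℕ) (i : Fin (2 * n)) : Commute (grGen n i) (grS n) := by
  rw [Commute, SemiconjBy, grS_eq, Finset.mul_sum, Finset.sum_mul]
  exact Finset.sum_congr rfl fun k _ => gen_mul_p n i k

lemma grD_B_S (n : ℕ) (k : Fin n) : grD n (B k) (grS n) = -grGen n (A k) := by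
  rw [grS_eq, map_sum]
  rw [Finset.sum_eq_single k]
  · rw [grD_p]
    have h1 : ¬ (A k = B k) := by simp only [A, B, Fin.ext_iff]; omega
    simp [h1]
  · intro j _ hj
    rw [grD_p]
    have h1 : ¬ (A j = B k) := by simp only [A, B, Fin.ext_iff]; omega
    have h2 : ¬ (B j = B k) := by
      simp only [B, Fin.ext_iff]
      intro h; exact hj (Fin.ext (by omega))
    simp [h1, h2]
  · simp

lemma grD_A_S (n : ℕ) (k : Fin n) : grD n (A k) (grS n) = grGen n (B k) := by
  rw [grS_eq, map_sum]
  rw [Finset.sum_eq_single k]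
  · rw [grD_p]
    have h1 : ¬ (B k = A k) := by simp only [A, B, Fin.ext_iff]; omega
    simp [h1]
  · intro j _ hj
    rw [grD_p]
    have h1 : ¬ (A j = A k) := by
      simp only [A, Fin.ext_iff]
      intro h; exact hj (Fin.ext (by omega))
    have h2 : ¬ (B j = A k) := by simp only [A, B, Fin.ext_iff]; omega
    simp [h1, h2]
  · simp


lemma grD_B_S_pow (n : ℕ) (k : Fin n) (m : ℕ) :
    grD n (B k) (grS n ^ (m + 1)) = (-(m + 1 : ℝ)) • (grGen n (A k) * grS n ^ m) := by
  induction m with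
  | zero => simp [grD_B_S]
  | succ m ih =>
    rw [pow_succ', grD_S_mul, grD_B_S, ih, mul_smul_comm]
    have hc : grS n * (grGen n (A k) * grS n ^ m) = grGen n (A k) * grS n ^ (m + 1) := by
      rw [← mul_assoc, ← (gen_comm_S n (A k)).eq, mul_assoc, ← pow_succ']
    rw [hc, neg_mul]
    push_cast
    module

lemma grD_A_S_pow (n : ℕ) (k : Fin n) (m : ℕ) :
    grD n (A k) (grS n ^ (m + 1)) = ((m + 1 : ℝ)) • (grGen n (B k) * grS n ^ m) := by
  induction m with
  | zero => simp [grD_A_S]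
  | succ m ih =>
    rw [pow_succ', grD_S_mul, grD_A_S, ih, mul_smul_comm]
    have hc : grS n * (grGen n (B k) * grS n ^ m) = grGen n (B k) * grS n ^ (m + 1) := by
      rw [← mul_assoc, ← (gen_comm_S n (B k)).eq, mul_assoc, ← pow_succ']
    rw [hc]
    push_cast
    module

lemma lap_pow (n m : ℕ) :
    grLapF n (grS n ^ (m + 1)) =
      ((-(4:ℝ)) * (m + 1) * ((n : ℝ) - m)) • grS n ^ m := by
  rw [grLapF_apply]
  cases m with
  | zero =>
    have hk : ∀ k : Fin n, grD n (A k) (grD n (B k) (grS n ^ (0 + 1))) = (-1 : Grassmann n) := by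
      intro k
      rw [pow_one, grD_B_S, map_neg, grD_gen]
      simp
    rw [Finset.sum_congr rfl (fun k _ => hk k), Finset.sum_const, Finset.card_univ,
      Fintype.card_fin]
    rw [pow_zero]
    push_cast
    match_scalars
    ring
  | succ m =>
    have hk : ∀ k : Fin n, grD n (A k) (grD n (B k) (grS n ^ (m + 1 + 1))) =
        (-(m + 2 : ℝ)) • grS n ^ (m + 1) +
          ((m + 2 : ℝ) * (m + 1 : ℝ)) • (p n k * grS n ^ m) := by
      intro k
      rw [grD_B_S_pow, map_smul, grD_mul, grD_A_S_pow]
      simp only [if_pos rfl, one_smul, smul_sub, mul_smul_comm, smul_smul, ← mul_assoc, ← p_def]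
      push_cast
      module
    rw [Finset.sum_congr rfl (fun k _ => hk k), Finset.sum_add_distrib, Finset.sum_const,
      Finset.card_univ, Fintype.card_fin, ← Finset.smul_sum, ← Finset.sum_mul, ← grS_eq,
      ← pow_succ']
    match_scalars
    ring

end GrAux

/-- For `0 ≤ l ≤ n` and `0 ≤ j ≤ n-l`,
`Δ_f^j (s^{n-l}) = 4^j (-1)^j ((n-l)!/(n-l-j)!) ((l+j)!/l!) s^{n-l-j}`. -/
theorem stmt6 (n : ℕ) :
    ∀ l j : ℕ, l ≤ n → j ≤ n - l →
      (grLapF n ^ j) (grS n ^ (n - l)) =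
        ((4 : ℝ) ^ j * (-1 : ℝ) ^ j *
            ((n - l).factorial / (n - l - j).factorial : ℝ) *
            ((l + j).factorial / l.factorial : ℝ)) • grS n ^ (n - l - j) := by
  intro l j hl
  induction j with
  | zero =>
    intro _
    have h := Nat.cast_ne_zero (R := ℝ).mpr (Nat.factorial_ne_zero l)
    have h2 := Nat.cast_ne_zero (R := ℝ).mpr (Nat.factorial_ne_zero (n - l))
    simp [div_self h, div_self h2]
  | succ j ih =>
    intro hj
    have hj' : j ≤ n - l := by omega
    have hm : n - l - j = (n - l - (j + 1)) + 1 := by omega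
    rw [pow_succ', Module.End.mul_apply, ih hj', map_smul, hm, GrAux.lap_pow, smul_smul]
    congr 1
    set m := n - l - (j + 1) with hmdef
    have h1 : m + (l + j + 1) = n := by omega
    have h2 : ((n : ℝ) - (m : ℝ)) = (l : ℝ) + j + 1 := by
      have := congrArg (Nat.cast : ℕ → ℝ) h1
      push_cast at this
      linarith
    have hlj : l + (j + 1) = (l + j) + 1 := by omega
    rw [hlj, Nat.factorial_succ (l + j), Nat.factorial_succ m, h2]
    have hf1 : ((m.factorial : ℝ)) ≠ 0 := Nat.cast_ne_zero.mpr (Nat.factorial_ne_zero _)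
    have hf2 : ((l.factorial : ℝ)) ≠ 0 := Nat.cast_ne_zero.mpr (Nat.factorial_ne_zero _)
    push_cast
    field_simp
    ring
end

section
/- Fix integers k ≥ 1 and n ≥ 0. The sequence a_l = 4^l (l+k-1)!/((n-l)! (k-1)!), 0 ≤ l ≤ n, satisfies ∑_{j=0}^{min(k,l)} a_{l-j} C(k,j) 4^j (-1)^j ((n-l+j)!/(n-l)!) (l!/(l-j)!) = 0 for all 1 ≤ l ≤ n, together with a_0 = 1/n!. -/
open Finset Polynomial

lemma findiff : ∀ (k : ℕ) (p : Polynomial ℚ), p.degree < k →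
    ∑ j ∈ Finset.range (k + 1), (-1 : ℚ) ^ j * (k.choose j : ℚ) * p.eval (j:ℚ) = 0 := by
  intro k
  induction k with
  | zero =>
      intro p hp
      have : p = 0 := Polynomial.degree_eq_bot.mp
        (Nat.WithBot.lt_zero_iff.mp (by exact_mod_cast hp))
      simp [this]
  | succ k ih =>
      intro p hp
      by_cases hp0 : p = 0
      · simp [hp0]
      set q := p - p.comp (X + 1) with hq
      have hqe : ∀ j : ℕ, q.eval (j : ℚ) = p.eval (j : ℚ) - p.eval ((j : ℚ) + 1) := by
        intro j
        simp [hq, Polynomial.eval_comp]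
      have hnd1 : (X + 1 : ℚ[X]).natDegree = 1 := by
        simpa using Polynomial.natDegree_X_add_C (1 : ℚ)
      have hlead : (p.comp (X + 1)).leadingCoeff = p.leadingCoeff := by
        rw [Polynomial.leadingCoeff_comp (by rw [hnd1]; norm_num)]
        have : (X + 1 : ℚ[X]).leadingCoeff = 1 := by
          simpa using Polynomial.leadingCoeff_X_add_C (1 : ℚ)
        rw [this]; simp
      have hc0 : p.comp (X + 1) ≠ 0 := by
        intro h
        apply hp0
        have := hlead
        rw [h] at this
        simpa [Polynomial.leadingCoeff_eq_zero] using this.symm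
      have hdeg : (p.comp (X + 1)).degree = p.degree := by
        rw [Polynomial.degree_eq_natDegree hc0, Polynomial.degree_eq_natDegree hp0,
          Polynomial.natDegree_comp, hnd1, mul_one]
      have h1 : q.degree < p.degree := Polynomial.degree_sub_lt hdeg.symm hp0 hlead.symm
      have h3 : p.degree ≤ (k : WithBot ℕ) := by
        rcases Polynomial.degree_eq_natDegree hp0 with hd
        rw [hd] at hp ⊢
        exact_mod_cast Nat.lt_succ_iff.mp (by exact_mod_cast hp)
      have hdq : q.degree < k := lt_of_lt_of_le h1 h3
      have key := ih q hdq
      simp only [hqe, mul_sub] at key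
      rw [Finset.sum_sub_distrib] at key
      -- key : ∑ g - ∑ g' = 0
      have expand : ∑ j ∈ Finset.range (k + 2), (-1 : ℚ) ^ j * (((k+1).choose j : ℕ) : ℚ) * p.eval (j:ℚ)
          = (∑ j ∈ Finset.range (k + 1), (-1 : ℚ) ^ j * (k.choose j : ℚ) * p.eval (j:ℚ))
            - ∑ j ∈ Finset.range (k + 1), (-1 : ℚ) ^ j * (k.choose j : ℚ) * p.eval ((j : ℚ) + 1) := by
        rw [Finset.sum_range_succ' _ (k + 1),
            Finset.sum_range_succ' (fun j => (-1 : ℚ) ^ j * (k.choose j : ℚ) * p.eval (j:ℚ)) k,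
            Finset.sum_range_succ (fun j => (-1 : ℚ) ^ j * (k.choose j : ℚ) * p.eval ((j:ℚ) + 1)) k,
            Finset.sum_range_succ]
        have hcongr : ∀ j ∈ Finset.range k,
            (-1 : ℚ) ^ (j+1) * (((k+1).choose (j+1) : ℕ) : ℚ) * p.eval (((j+1 : ℕ)):ℚ)
            = (-1 : ℚ) ^ (j+1) * ((k.choose (j+1) : ℕ) : ℚ) * p.eval (((j+1 : ℕ)):ℚ)
              - (-1 : ℚ) ^ j * (k.choose j : ℚ) * p.eval ((j : ℚ) + 1) := by
          intro j _
          rw [Nat.choose_succ_succ]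
          push_cast
          ring
        rw [Finset.sum_congr rfl hcongr, Finset.sum_sub_distrib]
        simp only [Nat.choose_self, Nat.choose_zero_right, Nat.cast_one, Nat.cast_ofNat]
        push_cast
        ring
      have : ∑ j ∈ Finset.range (k + 2), (-1 : ℚ) ^ j * (((k+1).choose j : ℕ) : ℚ) * p.eval (j:ℚ) = 0 := by
        rw [expand]; linarith [key]
      exact this

lemma factprod (m d : ℕ) : (((m + d).factorial : ℕ) : ℚ)
    = (m.factorial : ℚ) * ∏ i ∈ Finset.range d, ((m : ℚ) + i + 1) := by
  induction d with
  | zero => simp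
  | succ d ih =>
      rw [Finset.prod_range_succ, ← mul_assoc, ← ih]
      have : m + (d + 1) = (m + d) + 1 := by omega
      rw [this, Nat.factorial_succ]
      push_cast
      ring

/-- The coefficients `a_l = 4^l (l+k-1)!/((n-l)! (k-1)!)` of the fundamental solution
of `Δ^k` in superspace. -/
noncomputable def aCoef (k n l : ℕ) : ℚ :=
  4 ^ l * ((l + k - 1).factorial : ℚ) / (((n - l).factorial : ℚ) * ((k - 1).factorial : ℚ))

/-- For `k ≥ 1` and `n ≥ 0`, the sequence `a_l = 4^l (l+k-1)!/((n-l)!(k-1)!)` satisfies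
`∑_{j=0}^{min(k,l)} a_{l-j} C(k,j) 4^j (-1)^j ((n-l+j)!/(n-l)!) (l!/(l-j)!) = 0` for all
`1 ≤ l ≤ n`, together with `a_0 = 1/n!`. -/
theorem stmt10 (k n : ℕ) (hk : 1 ≤ k) :
    (∀ l : ℕ, 1 ≤ l → l ≤ n →
      ∑ j ∈ Finset.range (min k l + 1),
        aCoef k n (l - j) * (k.choose j : ℚ) * 4 ^ j * (-1 : ℚ) ^ j *
          (((n - l + j).factorial : ℚ) / ((n - l).factorial : ℚ)) *
          ((l.factorial : ℚ) / ((l - j).factorial : ℚ)) = 0) ∧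
    aCoef k n 0 = 1 / (n.factorial : ℚ) := by
  constructor
  · intro l hl1 hln
    set d := k - 1 with hd
    have hkd : k = d + 1 := by omega
    set p : Polynomial ℚ := ∏ i ∈ Finset.range d, (Polynomial.C ((l:ℚ) + i + 1) - Polynomial.X)
      with hp
    have hdeg : p.degree < k := by
      have h2 : p.degree = d := by
        rw [hp, Polynomial.degree_prod]
        have h3 : ∀ i ∈ Finset.range d,
            (Polynomial.C ((l:ℚ) + i + 1) - Polynomial.X).degree = 1 := by
          intro i _
          rw [show Polynomial.C ((l:ℚ)+i+1) - Polynomial.X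
              = -(Polynomial.X - Polynomial.C ((l:ℚ)+i+1)) by ring,
            Polynomial.degree_neg, Polynomial.degree_X_sub_C]
        rw [Finset.sum_congr rfl h3]
        simp
      rw [h2, hkd]
      exact_mod_cast Nat.lt_succ_self d
    have H := findiff k p hdeg
    have heval : ∀ j : ℕ, p.eval (j:ℚ) = ∏ i ∈ Finset.range d, ((l:ℚ) + i + 1 - j) := by
      intro j; simp [hp, Polynomial.eval_prod]
    have termeq : ∀ j ∈ Finset.range (min k l + 1),
        aCoef k n (l - j) * (k.choose j : ℚ) * 4 ^ j * (-1 : ℚ) ^ j *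
          (((n - l + j).factorial : ℚ) / ((n - l).factorial : ℚ)) *
          ((l.factorial : ℚ) / ((l - j).factorial : ℚ))
        = (4 ^ l * (l.factorial : ℚ) / (((k-1).factorial : ℚ) * ((n - l).factorial : ℚ)))
            * ((-1 : ℚ) ^ j * (k.choose j : ℚ) * p.eval (j:ℚ)) := by
      intro j hj
      simp only [Finset.mem_range] at hj
      have hjl : j ≤ l := by omega
      have hjk : j ≤ k := by omega
      have hpe : p.eval (j:ℚ) = (((l - j + d).factorial : ℕ) : ℚ) / (((l-j).factorial : ℕ) : ℚ) := by
        rw [heval j]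
        have hcast : ∀ i ∈ Finset.range d, ((l:ℚ) + i + 1 - j) = (((l-j:ℕ)):ℚ) + i + 1 := by
          intro i _
          have : ((l - j : ℕ) : ℚ) = (l:ℚ) - j := by
            push_cast [Nat.cast_sub hjl]; ring
          rw [this]; ring
        rw [Finset.prod_congr rfl hcast, factprod (l - j) d, mul_comm, mul_div_assoc,
          div_self (by exact_mod_cast Nat.factorial_ne_zero (l-j)), mul_one]
      rw [hpe]
      simp only [aCoef]
      rw [show l - j + k - 1 = l - j + d by omega, show n - (l - j) = n - l + j by omega]
      rw [show ((4:ℚ)^(l-j)) = 4^l / 4^j by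
        rw [eq_div_iff (by positivity), ← pow_add]; congr 1; omega]
      have e1 : ((l - j + d).factorial : ℚ) ≠ 0 := by exact_mod_cast Nat.factorial_ne_zero _
      have e2 : ((n - l + j).factorial : ℚ) ≠ 0 := by exact_mod_cast Nat.factorial_ne_zero _
      have e3 : ((n - l).factorial : ℚ) ≠ 0 := by exact_mod_cast Nat.factorial_ne_zero _
      have e4 : ((l - j).factorial : ℚ) ≠ 0 := by exact_mod_cast Nat.factorial_ne_zero _
      have e5 : ((k - 1).factorial : ℚ) ≠ 0 := by exact_mod_cast Nat.factorial_ne_zero _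
      have e6 : ((4:ℚ) ^ j) ≠ 0 := by positivity
      generalize ((l - j + d).factorial : ℚ) = A at e1 ⊢
      generalize ((n - l + j).factorial : ℚ) = B at e2 ⊢
      generalize ((n - l).factorial : ℚ) = E at e3 ⊢
      generalize ((l - j).factorial : ℚ) = F at e4 ⊢
      generalize ((k - 1).factorial : ℚ) = D at e5 ⊢
      generalize (l.factorial : ℚ) = L
      field_simp
    calc ∑ j ∈ Finset.range (min k l + 1),
        aCoef k n (l - j) * (k.choose j : ℚ) * 4 ^ j * (-1 : ℚ) ^ j *
          (((n - l + j).factorial : ℚ) / ((n - l).factorial : ℚ)) *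
          ((l.factorial : ℚ) / ((l - j).factorial : ℚ))
        = ∑ j ∈ Finset.range (min k l + 1),
            (4 ^ l * (l.factorial : ℚ) / (((k-1).factorial : ℚ) * ((n - l).factorial : ℚ)))
              * ((-1 : ℚ) ^ j * (k.choose j : ℚ) * p.eval (j:ℚ)) :=
          Finset.sum_congr rfl termeq
      _ = ∑ j ∈ Finset.range (k + 1),
            (4 ^ l * (l.factorial : ℚ) / (((k-1).factorial : ℚ) * ((n - l).factorial : ℚ)))
              * ((-1 : ℚ) ^ j * (k.choose j : ℚ) * p.eval (j:ℚ)) := by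
          apply Finset.sum_subset (Finset.range_subset_range.mpr (by omega))
          intro j hj hj2
          simp only [Finset.mem_range] at hj hj2
          have hz : p.eval (j:ℚ) = 0 := by
            rw [heval]
            apply Finset.prod_eq_zero (Finset.mem_range.mpr (show j - l - 1 < d by omega))
            have : ((j - l - 1 : ℕ) : ℚ) = (j:ℚ) - l - 1 := by
              rw [Nat.cast_sub (by omega : 1 ≤ j - l), Nat.cast_sub (by omega : l ≤ j)]
              push_cast; ring
            rw [this]; ring
          rw [hz]; ring
      _ = (4 ^ l * (l.factorial : ℚ) / (((k-1).factorial : ℚ) * ((n - l).factorial : ℚ)))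
            * ∑ j ∈ Finset.range (k + 1), (-1 : ℚ) ^ j * (k.choose j : ℚ) * p.eval (j:ℚ) :=
          (Finset.mul_sum _ _ _).symm
      _ = 0 := by rw [H, mul_zero]
  · simp only [aCoef, pow_zero, Nat.zero_add, Nat.sub_zero, one_mul]
    rw [div_eq_div_iff (by
        exact mul_ne_zero (by exact_mod_cast Nat.factorial_ne_zero n)
          (by exact_mod_cast Nat.factorial_ne_zero (k-1)))
      (by exact_mod_cast Nat.factorial_ne_zero n)]
    ring
end
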